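/- Let H be a hereditary graph property closed under union with K₁, G a graph, and e = uv an edge. If γ_H(G) < γ_H(G − e), then γ_H(G) = γ_H(G − e) − 1. -/

import Mathlib

open SimpleGraph

/-- A graph property: a class of finite simple graphs on arbitrary vertex types. -/
abbrev GraphProp := ∀ (V : Type), SimpleGraph V → Prop

/-- Closure under graph isomorphism. -/
def IsoClosed (P : GraphProp) : Prop :=
  ∀ (V W : Type) (G : SimpleGraph V) (H : SimpleGraph W), Nonempty (G ≃g H) → P V G → P W H

/-- A property is nondegenerate if it contains all edgeless graphs. -/
def Nondegenerate (P : GraphProp) : Prop :=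
  IsoClosed P ∧ ∀ (V : Type), P V ⊥

/-- Closed under induced subgraphs. -/
def InducedHereditary (P : GraphProp) : Prop :=
  IsoClosed P ∧ ∀ (V : Type) (G : SimpleGraph V) (s : Set V), P V G → P s (G.induce s)

/-- Closed under all subgraphs. -/
def Hereditary (P : GraphProp) : Prop :=
  InducedHereditary P ∧ ∀ (V : Type) (G G' : SimpleGraph V), G' ≤ G → P V G → P V G'

/-- The graph `G` together with one new isolated vertex. -/
def addK1 {V : Type} (G : SimpleGraph V) : SimpleGraph (V ⊕ Unit) where
  Adj a b := ∃ x y, a = Sum.inl x ∧ b = Sum.inl y ∧ G.Adj x y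
  symm := by constructor; rintro a b ⟨x, y, rfl, rfl, h⟩; exact ⟨y, x, rfl, rfl, h.symm⟩
  loopless := by constructor; rintro a ⟨x, y, rfl, hy, h⟩; simp only [Sum.inl.injEq] at hy; subst hy; exact G.irrefl h

/-- Closure under disjoint union with `K₁`. -/
def ClosedUnderK1 (P : GraphProp) : Prop :=
  ∀ (V : Type) (G : SimpleGraph V), P V G → P (V ⊕ Unit) (addK1 G)

/-- `S` is a dominating set of `G`. -/
def IsDominating {V : Type} (G : SimpleGraph V) (S : Set V) : Prop :=
  ∀ v ∉ S, ∃ u ∈ S, G.Adj u v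

/-- `S` is a dominating set inducing a subgraph with property `P`. -/
def IsDomPSet (P : GraphProp) {V : Type} (G : SimpleGraph V) (S : Set V) : Prop :=
  IsDominating G S ∧ P S (G.induce S)

/-- The domination number with respect to the property `P`. -/
noncomputable def gammaP (P : GraphProp) {V : Type} [Fintype V] (G : SimpleGraph V) : ℕ :=
  sInf (Set.ncard '' {S : Set V | IsDomPSet P G S})

/-- A minimum dominating `P`-set. -/
def IsGammaSet (P : GraphProp) {V : Type} [Fintype V] (G : SimpleGraph V) (S : Set V) : Prop :=
  IsDomPSet P G S ∧ S.ncard = gammaP P G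

/-- The ordinary domination number. -/
noncomputable def gamma {V : Type} [Fintype V] (G : SimpleGraph V) : ℕ :=
  sInf (Set.ncard '' {S : Set V | IsDominating G S})

/-- The graph obtained from `G` by deleting the edge `uv` and replacing it by the
path `u - x₀ - x₁ - ⋯ - x_{t-1} - v` through `t` new vertices. -/
def subdiv {V : Type} (G : SimpleGraph V) (u v : V) (t : ℕ) : SimpleGraph (V ⊕ Fin t) where
  Adj a b := match a, b with
    | Sum.inl a, Sum.inl b => G.Adj a b ∧ ¬((a = u ∧ b = v) ∨ (a = v ∧ b = u))
    | Sum.inl a, Sum.inr i => (a = u ∧ (i : ℕ) = 0) ∨ (a = v ∧ (i : ℕ) + 1 = t)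
    | Sum.inr i, Sum.inl a => (a = u ∧ (i : ℕ) = 0) ∨ (a = v ∧ (i : ℕ) + 1 = t)
    | Sum.inr i, Sum.inr j => (i : ℕ) + 1 = (j : ℕ) ∨ (j : ℕ) + 1 = (i : ℕ)
  symm := by
    constructor
    rintro (a | i) (b | j) h
    · exact ⟨h.1.symm, fun hc => h.2 (by tauto)⟩
    · exact h
    · exact h
    · tauto
  loopless := by
    constructor
    rintro (a | i) h
    · exact G.irrefl h.1
    · omega

/-- The private neighbour set `pn_G[x, X] = {y : N[y,G] ∩ X = {x}}`. -/
def pn {V : Type} (G : SimpleGraph V) (X : Set V) (x : V) : Set V :=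
  {y | insert y (G.neighborSet y) ∩ X = {x}}

/-- The graph `G` with the vertex `v` deleted. -/
abbrev delVert {V : Type} (G : SimpleGraph V) (v : V) : SimpleGraph {w : V // w ≠ v} :=
  G.induce {w : V | w ≠ v}

/-- An independent set. -/
def IsIndep {V : Type} (G : SimpleGraph V) (S : Set V) : Prop :=
  S.Pairwise fun a b => ¬ G.Adj a b

lemma P_bot_fin (P : GraphProp) (h1 : Hereditary P) (h2 : ClosedUnderK1 P)
    {W : Type} {H : SimpleGraph W} (hP : P W H) : ∀ n, P (Fin n) ⊥ := by
  have hiso := h1.1.1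
  have h0 : P (Fin 0) ⊥ := by
    have hW : P W ⊥ := h1.2 W H ⊥ bot_le hP
    have hE : P ↑(∅ : Set W) ((⊥ : SimpleGraph W).induce ∅) := h1.1.2 W ⊥ ∅ hW
    refine hiso _ _ _ _ ⟨⟨Equiv.equivOfIsEmpty _ _, ?_⟩⟩ hE
    intro a b; exact isEmptyElim a
  intro n
  induction n with
  | zero => exact h0
  | succ n ih =>
    have h' := h2 (Fin n) ⊥ ih
    refine hiso _ _ _ _ ⟨⟨Fintype.equivOfCardEq (by simp), ?_⟩⟩ h'
    intro a b
    simp [addK1]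

lemma P_bot (P : GraphProp) (h1 : Hereditary P) (h2 : ClosedUnderK1 P)
    {W : Type} {H : SimpleGraph W} (hP : P W H) (U : Type) [Finite U] : P U ⊥ := by
  have := Fintype.ofFinite U
  refine h1.1.1 _ _ _ _ ⟨⟨(Fintype.equivFin U).symm, ?_⟩⟩ (P_bot_fin P h1 h2 hP (Fintype.card U))
  intro a b; simp

lemma exists_domPSet (P : GraphProp) (h1 : Hereditary P) (h2 : ClosedUnderK1 P)
    {V : Type} [Fintype V] (G : SimpleGraph V)
    {W : Type} {H : SimpleGraph W} (hP : P W H) :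
    {S : Set V | IsDomPSet P G S}.Nonempty := by
  classical
  obtain ⟨S, hSmem, hSmax⟩ := Set.Finite.exists_maximalFor id {S : Set V | IsIndep G S}
    (Set.toFinite _) ⟨∅, by simp [IsIndep]⟩
  have hdom : IsDominating G S := by
    intro w hw
    by_contra hno
    push_neg at hno
    have hind : IsIndep G (insert w S) := by
      have hsymm : Symmetric (fun a b => ¬ G.Adj a b) := fun a b h hab => h hab.symm
      haveI : Std.Symm (fun a b => ¬ G.Adj a b) := ⟨hsymm⟩
      rw [IsIndep, Set.pairwise_insert_of_symm]
      exact ⟨hSmem, fun b hb _ => fun hadj => hno b hb hadj.symm⟩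
    have := hSmax hind (Set.subset_insert w S)
    simp only [id] at this
    exact hw (this (Set.mem_insert w S))
  have hbotS : G.induce S = ⊥ := by
    ext a b
    simp only [comap_adj, Function.Embedding.coe_subtype, bot_adj, iff_false]
    intro h
    rcases eq_or_ne (a : V) (b : V) with hEq | hne
    · exact G.loopless.irrefl _ (hEq ▸ h)
    · exact hSmem a.2 b.2 hne h
  refine ⟨S, hdom, ?_⟩
  rw [hbotS]
  exact P_bot P h1 h2 hP ↑S

lemma insert_domPSet (P : GraphProp) (h1 : Hereditary P) (h2 : ClosedUnderK1 P)
    {V : Type} (G : SimpleGraph V) (u v : V) (S : Set V)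
    (hS : IsDomPSet P G S) (hv : v ∉ S)
    (hviso : ∀ s ∈ S, ¬ (G.deleteEdges {s(u, v)}).Adj s v) :
    IsDomPSet P (G.deleteEdges {s(u, v)}) (insert v S) := by
  classical
  set G' := G.deleteEdges {s(u, v)} with hG'
  constructor
  · intro w hw
    have hwS : w ∉ S := fun h => hw (Set.mem_insert_of_mem v h)
    have hwv : w ≠ v := fun h => hw (h ▸ Set.mem_insert v S)
    obtain ⟨s, hs, hadj⟩ := hS.1 w hwS
    by_cases hG : G'.Adj s w
    · exact ⟨s, Set.mem_insert_of_mem v hs, hG⟩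
    · exfalso
      rw [hG', deleteEdges_adj] at hG
      push_neg at hG
      have := hG hadj
      simp only [Set.mem_singleton_iff, Sym2.eq_iff] at this
      rcases this with ⟨rfl, rfl⟩ | ⟨rfl, rfl⟩
      · exact hwv rfl
      · exact hv hs
  · have hPS : P ↑S (G'.induce S) := by
      refine h1.2 ↑S (G.induce S) (G'.induce S) ?_ hS.2
      intro a b hab
      exact G.deleteEdges_le _ hab
    have hK1 := h2 ↑S (G'.induce S) hPS
    refine h1.1.1 _ _ _ _ ⟨⟨?_, ?_⟩⟩ hK1
    · exact {
        toFun := fun a => match a with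
          | Sum.inl x => ⟨x.1, Set.mem_insert_of_mem v x.2⟩
          | Sum.inr _ => ⟨v, Set.mem_insert v S⟩
        invFun := fun x => if h : (x : V) ∈ S then Sum.inl ⟨x, h⟩ else Sum.inr ()
        left_inv := by
          rintro (⟨x, hx⟩ | ⟨⟩)
          · simp [hx]
          · simp [hv]
        right_inv := by
          rintro ⟨x, hx⟩
          by_cases h : x ∈ S
          · simp [h]
          · have hxv : x = v := by
              rcases Set.mem_insert_iff.mp hx with h' | h'
              · exact h'
              · exact absurd h' h
            subst hxv
            simp [h] }
    · rintro (⟨x, hx⟩ | ⟨⟩) (⟨y, hy⟩ | ⟨⟩)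
      · simp only [Equiv.coe_fn_mk, comap_adj, Function.Embedding.coe_subtype, addK1]
        exact ⟨fun h => ⟨⟨x, hx⟩, ⟨y, hy⟩, rfl, rfl, h⟩,
          by rintro ⟨⟨a, ha⟩, ⟨b, hb⟩, h1', h2', h⟩; cases h1'; cases h2'; exact h⟩
      · simp only [Equiv.coe_fn_mk, comap_adj, Function.Embedding.coe_subtype, addK1]
        constructor
        · intro h; exact absurd h (hviso x hx)
        · rintro ⟨x', y', -, h, -⟩; exact absurd h (by simp)
      · simp only [Equiv.coe_fn_mk, comap_adj, Function.Embedding.coe_subtype, addK1]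
        constructor
        · intro h; exact absurd h.symm (hviso y hy)
        · rintro ⟨x', y', h, -, -⟩; exact absurd h (by simp)
      · simp only [Equiv.coe_fn_mk, comap_adj, Function.Embedding.coe_subtype, addK1]
        constructor
        · intro h; exact absurd h G'.irrefl
        · rintro ⟨x', y', h, -, -⟩; exact absurd h (by simp)


/-- if `γ_H(G) < γ_H(G − e)` then `γ_H(G) = γ_H(G − e) − 1`. -/
theorem gammaP_deleteEdge_lt (P : GraphProp) (h1 : Hereditary P) (h2 : ClosedUnderK1 P)
    {V : Type} [Fintype V] (G : SimpleGraph V) (u v : V) (he : G.Adj u v)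
    (hlt : gammaP P G < gammaP P (G.deleteEdges {s(u, v)})) :
    gammaP P G = gammaP P (G.deleteEdges {s(u, v)}) - 1 := by
  classical
  set G' := G.deleteEdges {s(u, v)} with hG'
  have hne' : {S : Set V | IsDomPSet P G' S}.Nonempty := by
    by_contra h
    rw [Set.not_nonempty_iff_eq_empty] at h
    have : gammaP P G' = 0 := by rw [gammaP, h]; simp
    omega
  obtain ⟨T, hT⟩ := hne'
  have hneG : {S : Set V | IsDomPSet P G S}.Nonempty := exists_domPSet P h1 h2 G hT.2
  obtain ⟨S, hS, hcard⟩ := Nat.sInf_mem (hneG.image Set.ncard)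
  have hS : IsDomPSet P G S := hS
  have hcard : S.ncard = gammaP P G := hcard
  have hle : gammaP P G' ≤ gammaP P G + 1 := by
    by_cases hd : IsDominating G' S
    · have hmem : IsDomPSet P G' S :=
        ⟨hd, h1.2 ↑S (G.induce S) (G'.induce S) (fun a b hab => G.deleteEdges_le _ hab) hS.2⟩
      have : gammaP P G' ≤ S.ncard := Nat.sInf_le ⟨S, hmem, rfl⟩
      omega
    · rw [IsDominating] at hd; push_neg at hd
      obtain ⟨w, hwS, hw⟩ := hd
      obtain ⟨s, hs, hadj⟩ := hS.1 w hwS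
      have hnadj : ¬ G'.Adj s w := hw s hs
      rw [hG', deleteEdges_adj] at hnadj
      push_neg at hnadj
      have hcases := hnadj hadj
      simp only [Set.mem_singleton_iff, Sym2.eq_iff] at hcases
      have key : ∃ S' : Set V, IsDomPSet P G' S' ∧ S'.ncard ≤ S.ncard + 1 := by
        rcases hcases with ⟨hsu, hwv⟩ | ⟨hsv, hwu⟩
        · subst hsu; subst hwv
          exact ⟨insert w S, insert_domPSet P h1 h2 G s w S hS hwS hw,
            Set.ncard_insert_le _ _⟩
        · subst hsv; subst hwu
          have hswap : G' = G.deleteEdges {s(s, w)} := by rw [hG', Sym2.eq_swap]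
          refine ⟨insert w S, ?_, Set.ncard_insert_le _ _⟩
          rw [hswap]
          exact insert_domPSet P h1 h2 G s w S hS hwS (by rw [← hswap]; exact hw)
      obtain ⟨S', hS', hle'⟩ := key
      have : gammaP P G' ≤ S'.ncard := Nat.sInf_le ⟨S', hS', rfl⟩
      omega
  omega
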